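/- Let X be a metric ANR, Y a metric space, f : Y → X continuous, Z ⊂ Y compact, U an open set with Z ⊂ U ⊂ Y, and ε > 0. Then there exists δ > 0 such that for every continuous g_Z : Z → X with d(g_Z, f|_Z) < δ there is a homotopy H : Y × I → X with H₀ = f, H₁|_Z = g_Z, H_t = f on Y \ U for all t, and diam(H({y} × I)) < ε for all y ∈ Y. -/

import Mathlib

open Set Metric unitInterval Filter

universe u v

/-- A metric space is an ANR iff it is an absolute neighborhood extensor for metric
spaces. -/
def IsANR (X : Type u) [MetricSpace X] : Prop :=
  ∀ (Y : Type v) [MetricSpace Y] (A : Set Y), IsClosed A →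
    ∀ f : A → X, Continuous f →
      ∃ (U : Set Y) (hAU : A ⊆ U), IsOpen U ∧
        ∃ g : U → X, Continuous g ∧ ∀ (a : Y) (ha : a ∈ A), g ⟨a, hAU ha⟩ = f ⟨a, ha⟩

namespace HET8aux

noncomputable def sqq (n : ℕ) : ℝ := 1 / (n + 1)

lemma sqq_pos (n : ℕ) : 0 < sqq n := by
  have h : (0:ℝ) < (n:ℝ) + 1 := by positivity
  exact div_pos one_pos h

lemma sqq_lt_sqq {m k : ℕ} (h : m < k) : sqq k < sqq m := by
  apply one_div_lt_one_div_of_lt (by positivity)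
  have : (m:ℝ) < k := by exact_mod_cast h
  linarith

lemma sqq_le_sqq {m k : ℕ} (h : m ≤ k) : sqq k ≤ sqq m := by
  rcases eq_or_lt_of_le h with rfl | h
  · exact le_refl _
  · exact (sqq_lt_sqq h).le

lemma sqq_inj {m k : ℕ} (h : sqq m = sqq k) : m = k := by
  rcases lt_trichotomy m k with hl | he | hl
  · exact absurd h (ne_of_gt (sqq_lt_sqq hl))
  · exact he
  · exact absurd h (ne_of_lt (sqq_lt_sqq hl))

lemma sqq_sub_succ (j : ℕ) : sqq j - sqq (j+1) = 1 / (((j:ℝ)+1) * ((j:ℝ)+2)) := by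
  unfold sqq
  push_cast
  have h1 : ((j:ℝ)+1) ≠ 0 := by positivity
  have h2 : ((j:ℝ)+2) ≠ 0 := by positivity
  have h3 : (j:ℝ) + 1 + 1 = (j:ℝ) + 2 := by ring
  rw [h3, div_sub_div _ _ h1 h2, div_eq_div_iff (by positivity) (by positivity)]
  ring

lemma sqq_gap_mono (j : ℕ) : sqq (j+1) - sqq (j+2) ≤ sqq j - sqq (j+1) := by
  rw [sqq_sub_succ, sqq_sub_succ]
  push_cast
  apply one_div_le_one_div_of_le (by positivity)
  nlinarith [Nat.cast_nonneg (α := ℝ) j]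

lemma sqq_gap {k m : ℕ} (h : |sqq k - sqq m| < sqq m - sqq (m+1)) : k = m := by
  rcases lt_trichotomy k m with hkm | he | hmk
  · exfalso
    obtain ⟨j, rfl⟩ : ∃ j, m = j + 1 := ⟨m - 1, by omega⟩
    have h2 : sqq j ≤ sqq k := sqq_le_sqq (by omega)
    have h3 := sqq_gap_mono j
    have h4 : sqq (j+1) < sqq j := sqq_lt_sqq (by omega)
    have h5 := le_abs_self (sqq k - sqq (j+1))
    linarith
  · exact he
  · exfalso
    have h2 : sqq k ≤ sqq (m+1) := sqq_le_sqq (by omega)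
    have h3 : sqq k < sqq m := sqq_lt_sqq hmk
    have h4 : |sqq k - sqq m| = sqq m - sqq k := by
      rw [abs_sub_comm, abs_of_nonneg (by linarith)]
    linarith

lemma dist_fst_le' {α : Type*} {β : Type*} [PseudoMetricSpace α] [PseudoMetricSpace β]
    (p q : α × β) : dist p.1 q.1 ≤ dist p q := by
  rw [Prod.dist_eq]
  exact le_max_left _ _

lemma dist_snd_le' {α : Type*} {β : Type*} [PseudoMetricSpace α] [PseudoMetricSpace β]
    (p q : α × β) : dist p.2 q.2 ≤ dist p q := by
  rw [Prod.dist_eq]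
  exact le_max_right _ _

/-- Uniform control near a compact subset of the domain of a continuous map on an open set. -/
lemma exists_unif_control {M : Type*} [MetricSpace M] {X : Type*} [MetricSpace X]
    {W : Set M} (hWo : IsOpen W) (G : W → X) (hG : Continuous G)
    {P : Set M} (hP : IsCompact P) (hPW : P ⊆ W) {η : ℝ} (hη : 0 < η) :
    ∃ r > 0, ∀ q (hq : q ∈ P), ∀ p, dist p q < r →
      ∃ hp : p ∈ W, dist (G ⟨p, hp⟩) (G ⟨q, hPW hq⟩) < η := by
  classical
  have key : ∀ q (hq : q ∈ P), ∃ ρ > 0, ball q ρ ⊆ W ∧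
      ∀ p (hp : p ∈ W), dist p q < ρ → dist (G ⟨p, hp⟩) (G ⟨q, hPW hq⟩) < η / 2 := by
    intro q hq
    have hqW : q ∈ W := hPW hq
    obtain ⟨ρ₁, hρ₁, hball⟩ := Metric.isOpen_iff.mp hWo q hqW
    have hc : ContinuousAt G ⟨q, hqW⟩ := hG.continuousAt
    rw [Metric.continuousAt_iff] at hc
    obtain ⟨ρ₂, hρ₂, hval⟩ := hc (η / 2) (by positivity)
    refine ⟨min ρ₁ ρ₂, lt_min hρ₁ hρ₂, ?_, ?_⟩
    · exact (ball_subset_ball (min_le_left _ _)).trans hball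
    · intro p hp hd
      have : dist (⟨p, hp⟩ : W) ⟨q, hqW⟩ < ρ₂ := by
        rw [Subtype.dist_eq]
        exact hd.trans_le (min_le_right _ _)
      exact hval this
  choose ρ hρpos hρW hρval using key
  rcases P.eq_empty_or_nonempty with rfl | hPne
  · exact ⟨1, one_pos, fun q hq => absurd hq (notMem_empty q)⟩
  have hcov : P ⊆ ⋃ q : P, ball q.1 (ρ q.1 q.2 / 2) := by
    intro x hx
    exact mem_iUnion.mpr ⟨⟨x, hx⟩, mem_ball_self (half_pos (hρpos x hx))⟩
  obtain ⟨t, ht⟩ := hP.elim_finite_subcover _ (fun q : P => isOpen_ball) hcov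
  have htne : t.Nonempty := by
    obtain ⟨x, hx⟩ := hPne
    obtain ⟨i, hit, -⟩ := mem_iUnion₂.mp (ht hx)
    exact ⟨i, hit⟩
  set r := t.inf' htne (fun q => ρ q.1 q.2 / 2) with hr
  have hrpos : 0 < r := by
    rw [hr, Finset.lt_inf'_iff]
    intro q hq
    exact half_pos (hρpos q.1 q.2)
  refine ⟨r, hrpos, ?_⟩
  intro q hq p hd
  obtain ⟨i, hit, hqi⟩ := mem_iUnion₂.mp (ht hq)
  rw [mem_ball] at hqi
  have hri : r ≤ ρ i.1 i.2 / 2 := Finset.inf'_le _ hit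
  have hpi : dist p i.1 < ρ i.1 i.2 := by
    calc dist p i.1 ≤ dist p q + dist q i.1 := dist_triangle _ _ _
      _ < r + ρ i.1 i.2 / 2 := by linarith
      _ ≤ ρ i.1 i.2 := by linarith
  have hpW : p ∈ W := hρW i.1 i.2 (mem_ball.mpr hpi)
  refine ⟨hpW, ?_⟩
  have h1 := hρval i.1 i.2 p hpW hpi
  have h2 := hρval i.1 i.2 q (hPW hq) (by linarith)
  calc dist (G ⟨p, hpW⟩) (G ⟨q, hPW hq⟩)
      ≤ dist (G ⟨p, hpW⟩) (G ⟨i.1, hPW i.2⟩) + dist (G ⟨i.1, hPW i.2⟩) (G ⟨q, hPW hq⟩) :=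
        dist_triangle _ _ _
    _ < η / 2 + η / 2 := by rw [dist_comm (G ⟨i.1, hPW i.2⟩)]; exact add_lt_add h1 h2
    _ = η := by ring

end HET8aux

open HET8aux

/-- the controlled Homotopy Extension Theorem (HET). -/
theorem stmt_8 {X : Type u} [MetricSpace X] (hX : IsANR.{u, v} X)
    {Y : Type v} [MetricSpace Y] (f : Y → X) (hf : Continuous f)
    (Z : Set Y) (hZ : IsCompact Z) (U : Set Y) (hU : IsOpen U) (hZU : Z ⊆ U)
    (ε : ℝ) (hε : 0 < ε) :
    ∃ δ > (0 : ℝ), ∀ gZ : Z → X, Continuous gZ →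
      (∀ z : Z, dist (gZ z) (f z) < δ) →
      ∃ H : Y × I → X, Continuous H ∧
        (∀ y : Y, H (y, 0) = f y) ∧
        (∀ z : Z, H (z, 1) = gZ z) ∧
        (∀ y : Y, y ∉ U → ∀ t : I, H (y, t) = f y) ∧
        (∀ y : Y, Metric.diam (H '' (({y} : Set Y) ×ˢ (univ : Set I))) < ε) := by
  classical
  -- dispose of the case Z = ∅
  rcases Z.eq_empty_or_nonempty with hZ0 | hZne
  · refine ⟨1, one_pos, fun gZ hgc hgd => ⟨fun p => f p.1, hf.comp continuous_fst, fun y => rfl,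
      ?_, fun y hy t => rfl, ?_⟩⟩
    · rintro ⟨z, hz⟩
      rw [hZ0] at hz
      exact absurd hz (notMem_empty z)
    · intro y
      have himg : (fun p : Y × I => f p.1) '' (({y} : Set Y) ×ˢ (univ : Set I)) = {f y} := by
        ext a
        constructor
        · rintro ⟨⟨y', t⟩, ⟨hy', -⟩, rfl⟩
          exact mem_singleton_iff.mpr (congrArg f hy')
        · rintro ha
          rw [mem_singleton_iff] at ha
          exact ⟨(y, 0), ⟨rfl, mem_univ _⟩, ha.symm⟩
      rw [himg, diam_singleton]
      exact hε
  -- main case : by contradiction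
  by_contra hcon
  -- bad sequence
  have hstep : ∀ n : ℕ, ∃ gZ : Z → X, Continuous gZ ∧ (∀ z : Z, dist (gZ z) (f z) < sqq n) ∧
      ¬∃ H : Y × I → X, Continuous H ∧
        (∀ y : Y, H (y, 0) = f y) ∧
        (∀ z : Z, H (z, 1) = gZ z) ∧
        (∀ y : Y, y ∉ U → ∀ t : I, H (y, t) = f y) ∧
        (∀ y : Y, Metric.diam (H '' (({y} : Set Y) ×ˢ (univ : Set I))) < ε) := by
    intro n
    by_contra hno
    push_neg at hno
    exact hcon ⟨sqq n, sqq_pos n, hno⟩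
  choose g hgc hgcl hgbad using hstep
  -- the closed set S₀ ⊆ ℝ
  set S₀ : Set ℝ := insert 0 (range sqq) with hS₀
  have hS₀c : IsClosed S₀ := by
    have ht : Tendsto sqq atTop (nhds (0:ℝ)) := tendsto_one_div_add_atTop_nhds_zero_nat
    exact ht.isCompact_insert_range.isClosed
  -- the closed set A ⊆ Y × ℝ × ℝ
  set A : Set (Y × ℝ × ℝ) := {p | p.2.2 = 0} ∪ ({p | p.2.1 = 0} ∪
      {p | p.1 ∈ Z ∧ p.2.1 = 1 ∧ p.2.2 ∈ S₀}) with hA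
  have hc22 : Continuous fun p : Y × ℝ × ℝ => p.2.2 := continuous_snd.snd
  have hc21 : Continuous fun p : Y × ℝ × ℝ => p.2.1 := continuous_snd.fst
  have hAc : IsClosed A := by
    refine IsClosed.union ?_ (IsClosed.union ?_ ?_)
    · exact isClosed_eq hc22 continuous_const
    · exact isClosed_eq hc21 continuous_const
    · have h1 : IsClosed {p : Y × ℝ × ℝ | p.1 ∈ Z} := hZ.isClosed.preimage continuous_fst
      have h2 : IsClosed {p : Y × ℝ × ℝ | p.2.1 = 1} := isClosed_eq hc21 continuous_const
      have h3 : IsClosed {p : Y × ℝ × ℝ | p.2.2 ∈ S₀} := hS₀c.preimage hc22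
      have heq : {p : Y × ℝ × ℝ | p.1 ∈ Z ∧ p.2.1 = 1 ∧ p.2.2 ∈ S₀} =
          {p : Y × ℝ × ℝ | p.1 ∈ Z} ∩ ({p : Y × ℝ × ℝ | p.2.1 = 1} ∩ {p : Y × ℝ × ℝ | p.2.2 ∈ S₀}) := rfl
      rw [heq]
      exact h1.inter (h2.inter h3)
  -- the map F on A
  set F : A → X := fun p =>
    if h : p.1.1 ∈ Z ∧ p.1.2.1 = 1 ∧ ∃ n, p.1.2.2 = sqq n then g h.2.2.choose ⟨p.1.1, h.1⟩
    else f p.1.1 with hF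
  -- evaluation lemmas
  have hFf : ∀ (q : A), ¬(q.1.1 ∈ Z ∧ q.1.2.1 = 1 ∧ ∃ n, q.1.2.2 = sqq n) → F q = f q.1.1 := by
    intro q h
    simp only [hF]
    rw [dif_neg h]
  have hFs0 : ∀ (q : A), q.1.2.2 = 0 → F q = f q.1.1 := by
    intro q hs
    refine hFf q ?_
    rintro ⟨-, -, n, hn⟩
    rw [hs] at hn
    exact absurd hn.symm (ne_of_gt (sqq_pos n))
  have hFt0 : ∀ (q : A), q.1.2.1 ≠ 1 → F q = f q.1.1 := by
    intro q htq
    refine hFf q ?_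
    rintro ⟨-, h1, -⟩
    exact htq h1
  have hFg : ∀ (q : A) (hz : q.1.1 ∈ Z), q.1.2.1 = 1 → ∀ m, q.1.2.2 = sqq m →
      F q = g m ⟨q.1.1, hz⟩ := by
    intro q hz htq m hs
    have hcond : q.1.1 ∈ Z ∧ q.1.2.1 = 1 ∧ ∃ n, q.1.2.2 = sqq n := ⟨hz, htq, m, hs⟩
    simp only [hF]
    rw [dif_pos hcond]
    have hch : hcond.2.2.choose = m := by
      have hspec := hcond.2.2.choose_spec
      exact sqq_inj (by rw [← hspec, hs])
    subst hch
    rfl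
  -- component distance bounds in the triple product
  have hd1 : ∀ p q : Y × ℝ × ℝ, dist p.1 q.1 ≤ dist p q := fun p q => dist_fst_le' p q
  have hd2 : ∀ p q : Y × ℝ × ℝ, dist p.2.1 q.2.1 ≤ dist p q :=
    fun p q => le_trans (dist_fst_le' p.2 q.2) (dist_snd_le' p q)
  have hd3 : ∀ p q : Y × ℝ × ℝ, dist p.2.2 q.2.2 ≤ dist p q :=
    fun p q => le_trans (dist_snd_le' p.2 q.2) (dist_snd_le' p q)
  -- continuity of F
  have hFc : Continuous F := by
    rw [Metric.continuous_iff]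
    rintro ⟨⟨y₀, t₀, s₀⟩, hp⟩ η hη
    by_cases ht : t₀ = 1
    · subst ht
      by_cases hs : ∃ m, s₀ = sqq m
      · obtain ⟨m, rfl⟩ := hs
        have hz : y₀ ∈ Z := by
          rcases hp with h1 | h2 | h3
          · exact absurd h1 (ne_of_gt (sqq_pos m))
          · exact absurd h2 one_ne_zero
          · exact h3.1
        obtain ⟨α, hα, hαv⟩ := Metric.continuous_iff.mp (hgc m) ⟨y₀, hz⟩ η hη
        have hgap : 0 < sqq m - sqq (m+1) := sub_pos.mpr (sqq_lt_sqq (by omega))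
        refine ⟨min (min α (1/2)) (sqq m - sqq (m+1)), by positivity, ?_⟩
        rintro ⟨⟨y', t', s'⟩, hq⟩ hd
        rw [Subtype.dist_eq] at hd
        have hy' : dist y' y₀ < α :=
          lt_of_le_of_lt (hd1 (y',(t',s')) (y₀,(1,sqq m)))
            (hd.trans_le ((min_le_left _ _).trans (min_le_left _ _)))
        have ht' : dist t' 1 < 1/2 :=
          lt_of_le_of_lt (hd2 (y',(t',s')) (y₀,(1,sqq m)))
            (hd.trans_le ((min_le_left _ _).trans (min_le_right _ _)))
        have hs' : dist s' (sqq m) < sqq m - sqq (m+1) :=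
          lt_of_le_of_lt (hd3 (y',(t',s')) (y₀,(1,sqq m))) (hd.trans_le (min_le_right _ _))
        have hsne : s' ≠ 0 := by
          intro h0
          rw [h0, Real.dist_eq, zero_sub, abs_neg, abs_of_pos (sqq_pos m)] at hs'
          have := sqq_pos (m+1)
          linarith
        have hq3 : y' ∈ Z ∧ t' = 1 ∧ s' = sqq m := by
          rcases hq with h1 | h2 | h3
          · exact absurd h1 hsne
          · exfalso
            have h2' : t' = 0 := h2
            rw [h2'] at ht'
            rw [Real.dist_eq] at ht'
            norm_num at ht'
          · obtain ⟨hz', ht1, hsS⟩ := h3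
            refine ⟨hz', ht1, ?_⟩
            rcases hsS with hs0 | ⟨k, hk⟩
            · exact absurd hs0 hsne
            · have habs : |sqq k - sqq m| < sqq m - sqq (m+1) := by
                rw [hk]
                rw [Real.dist_eq] at hs'
                exact hs'
              have hk' : s' = sqq k := hk.symm
              rw [hk', sqq_gap habs]
        obtain ⟨hz', ht1, hs1⟩ := hq3
        rw [hFg ⟨(y',(t',s')), hq⟩ hz' ht1 m hs1, hFg ⟨(y₀,(1,sqq m)), hp⟩ hz rfl m rfl]
        exact hαv ⟨y', hz'⟩ (by rw [Subtype.dist_eq]; exact hy')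
      · have hs0 : s₀ = 0 := by
          rcases hp with h1 | h2 | h3
          · exact h1
          · exact absurd h2 one_ne_zero
          · rcases h3.2.2 with h0 | ⟨k, hk⟩
            · exact h0
            · exact absurd ⟨k, hk.symm⟩ hs
        subst hs0
        obtain ⟨α, hα, hαv⟩ := Metric.continuous_iff.mp hf y₀ (η/2) (by positivity)
        refine ⟨min α (η/2), by positivity, ?_⟩
        rintro ⟨⟨y', t', s'⟩, hq⟩ hd
        rw [Subtype.dist_eq] at hd
        have hy' : dist y' y₀ < α :=
          lt_of_le_of_lt (hd1 (y',(t',s')) (y₀,(1,0))) (hd.trans_le (min_le_left _ _))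
        have hs' : dist s' 0 < η/2 :=
          lt_of_le_of_lt (hd3 (y',(t',s')) (y₀,(1,0))) (hd.trans_le (min_le_right _ _))
        have hFp : F ⟨(y₀,(1,0)), hp⟩ = f y₀ := hFs0 _ rfl
        rw [hFp]
        by_cases hc' : y' ∈ Z ∧ t' = 1 ∧ ∃ k, s' = sqq k
        · obtain ⟨hz', ht1, k, hk⟩ := hc'
          rw [hFg ⟨(y',(t',s')), hq⟩ hz' ht1 k hk]
          have h1 : dist (g k ⟨y', hz'⟩) (f y') < sqq k := hgcl k ⟨y', hz'⟩
          have h2 : dist (f y') (f y₀) < η/2 := hαv y' hy'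
          have h3 : sqq k < η/2 := by
            have heq : dist s' 0 = sqq k := by
              rw [hk, Real.dist_eq, sub_zero, abs_of_pos (sqq_pos k)]
            rw [heq] at hs'
            exact hs'
          calc dist (g k ⟨y', hz'⟩) (f y₀)
              ≤ dist (g k ⟨y', hz'⟩) (f y') + dist (f y') (f y₀) := dist_triangle _ _ _
            _ < sqq k + η/2 := add_lt_add h1 h2
            _ < η := by linarith
        · rw [hFf ⟨(y',(t',s')), hq⟩ hc']
          exact lt_trans (hαv y' hy') (by linarith)
    · have hFp : F ⟨(y₀,(t₀,s₀)), hp⟩ = f y₀ := hFt0 _ ht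
      obtain ⟨α, hα, hαv⟩ := Metric.continuous_iff.mp hf y₀ η hη
      have hdpos : 0 < dist t₀ 1 := by
        rw [dist_pos]
        exact ht
      refine ⟨min α (dist t₀ 1), lt_min hα hdpos, ?_⟩
      rintro ⟨⟨y', t', s'⟩, hq⟩ hd
      rw [Subtype.dist_eq] at hd
      have hy' : dist y' y₀ < α :=
        lt_of_le_of_lt (hd1 (y',(t',s')) (y₀,(t₀,s₀))) (hd.trans_le (min_le_left _ _))
      have ht2 : dist t' t₀ < dist t₀ 1 :=
        lt_of_le_of_lt (hd2 (y',(t',s')) (y₀,(t₀,s₀))) (hd.trans_le (min_le_right _ _))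
      have ht' : t' ≠ 1 := by
        intro h1
        rw [h1, dist_comm] at ht2
        exact lt_irrefl _ ht2
      rw [hFp, hFt0 ⟨(y',(t',s')), hq⟩ ht']
      exact hαv y' hy'
  -- apply the ANR property of X
  obtain ⟨W, hAW, hWo, G, hGc, hGF⟩ := hX (Y × ℝ × ℝ) A hAc F hFc
  -- the compact anchor set P
  set P : Set (Y × ℝ × ℝ) := Z ×ˢ (Icc (0:ℝ) 1 ×ˢ ({0} : Set ℝ)) with hPdef
  have hPA : P ⊆ A := by
    rintro ⟨y, t, s⟩ ⟨hy, ht, hs⟩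
    exact Or.inl hs
  have hPW : P ⊆ W := fun p hp => hAW (hPA hp)
  have hPc : IsCompact P := hZ.prod (isCompact_Icc.prod isCompact_singleton)
  obtain ⟨r₁, hr₁, hctrl⟩ := exists_unif_control hWo G hGc hPc hPW (η := ε/8) (by positivity)
  -- G equals f at anchors
  have hGanchor : ∀ (z : Y), z ∈ Z → ∀ (a : ℝ), a ∈ Icc (0:ℝ) 1 →
      ∀ (hw : ((z,(a,0)) : Y × ℝ × ℝ) ∈ W), G ⟨(z,(a,0)), hw⟩ = f z := by
    intro z hzZ a ha hw
    have hmem : ((z,(a,0)) : Y × ℝ × ℝ) ∈ A := Or.inl rfl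
    have h1 := hGF (z,(a,0)) hmem
    have h2 : F ⟨(z,(a,0)), hmem⟩ = f z := hFs0 _ rfl
    exact h1.trans h2
  -- choose n with sqq n small
  obtain ⟨n, hn⟩ := exists_nat_one_div_lt (show (0:ℝ) < r₁/2 by positivity)
  have hsqn : sqq n < r₁ / 2 := hn
  -- a thickening of Z inside U
  obtain ⟨δU, hδU, hδUsub⟩ := hZ.exists_thickening_subset_open hU hZU
  set r₂ : ℝ := min (r₁/2) δU with hr₂def
  have hr₂ : 0 < r₂ := lt_min (by positivity) hδU
  -- the bump function
  set u : Y → ℝ := fun y => max 0 (1 - infDist y Z / r₂) with hu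
  have huc : Continuous u := continuous_const.max
    (continuous_const.sub ((continuous_infDist_pt Z).div_const r₂))
  have hu0 : ∀ y, 0 ≤ u y := fun y => le_max_left _ _
  have hu1 : ∀ y, u y ≤ 1 := by
    intro y
    apply max_le zero_le_one
    have h1 : 0 ≤ infDist y Z / r₂ := div_nonneg infDist_nonneg hr₂.le
    linarith
  have huZ : ∀ z, z ∈ Z → u z = 1 := by
    intro z hz
    rw [hu]
    simp [infDist_zero_of_mem hz]
  have hupos : ∀ y, u y ≠ 0 → infDist y Z < r₂ := by
    intro y hy
    by_contra hge
    push_neg at hge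
    have h1 : 1 ≤ infDist y Z / r₂ := (one_le_div hr₂).mpr hge
    exact hy (max_eq_left (by linarith))
  -- key membership and control
  have hkey : ∀ y, u y ≠ 0 → ∃ z, z ∈ Z ∧ ∀ a : ℝ, 0 ≤ a → a ≤ 1 →
      ∃ hw : ((y,(a, sqq n)) : Y × ℝ × ℝ) ∈ W, dist (G ⟨(y,(a, sqq n)), hw⟩) (f z) < ε/8 := by
    intro y hy
    obtain ⟨z, hzZ, hyz⟩ := (infDist_lt_iff hZne).mp (hupos y hy)
    refine ⟨z, hzZ, fun a ha0 ha1 => ?_⟩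
    have hqP : ((z,(a,0)) : Y × ℝ × ℝ) ∈ P := ⟨hzZ, ⟨ha0, ha1⟩, rfl⟩
    have hr₂r₁ : r₂ < r₁ := lt_of_le_of_lt (min_le_left _ _) (by linarith)
    have hdlt : dist ((y,(a, sqq n)) : Y × ℝ × ℝ) ((z,(a,0)) : Y × ℝ × ℝ) < r₁ := by
      rw [Prod.dist_eq, Prod.dist_eq]
      have h1 : dist y z < r₁ := hyz.trans hr₂r₁
      have h3 : dist (sqq n) (0:ℝ) < r₁ := by
        rw [Real.dist_eq, sub_zero, abs_of_pos (sqq_pos n)]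
        linarith
      apply max_lt h1
      apply max_lt _ h3
      rw [dist_self]
      linarith
    obtain ⟨hw, hval⟩ := hctrl _ hqP _ hdlt
    rw [hGanchor z hzZ a ⟨ha0, ha1⟩ (hPW hqP)] at hval
    exact ⟨hw, hval⟩
  -- total membership in W
  have hWmem : ∀ (y : Y) (τ : I), ((y, ((τ:ℝ) * u y, sqq n)) : Y × ℝ × ℝ) ∈ W := by
    intro y τ
    by_cases hy : u y = 0
    · rw [hy, mul_zero]
      exact hAW (Or.inr (Or.inl rfl))
    · obtain ⟨z, hzZ, hk⟩ := hkey y hy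
      obtain ⟨hw, -⟩ := hk ((τ:ℝ) * u y) (mul_nonneg τ.2.1 (hu0 y))
        (mul_le_one₀ τ.2.2 (hu0 y) (hu1 y))
      exact hw
  -- the homotopy
  set H : Y × I → X := fun p => G ⟨(p.1, ((p.2:ℝ) * u p.1, sqq n)), hWmem p.1 p.2⟩ with hH
  have hGeq : ∀ (a b : Y × ℝ × ℝ) (ha : a ∈ W) (hb : b ∈ W), a = b → G ⟨a, ha⟩ = G ⟨b, hb⟩ := by
    rintro a b ha hb rfl
    rfl
  -- value at the bottom slice
  have hbotA : ∀ y : Y, ((y, ((0:ℝ), sqq n)) : Y × ℝ × ℝ) ∈ A := fun y => Or.inr (Or.inl rfl)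
  have hbot : ∀ (y : Y) (hw : ((y, ((0:ℝ), sqq n)) : Y × ℝ × ℝ) ∈ W),
      G ⟨(y, ((0:ℝ), sqq n)), hw⟩ = f y := by
    intro y hw
    have h1 := hGF (y, ((0:ℝ), sqq n)) (hbotA y)
    have h2 : F ⟨(y, ((0:ℝ), sqq n)), hbotA y⟩ = f y := hFt0 _ (by norm_num)
    exact h1.trans h2
  -- continuity of H
  have hHc : Continuous H := by
    apply hGc.comp
    apply Continuous.subtype_mk
    exact continuous_fst.prodMk
      (((continuous_subtype_val.comp continuous_snd).mul (huc.comp continuous_fst)).prodMk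
        continuous_const)
  -- condition at time 0
  have hH0 : ∀ y : Y, H (y, 0) = f y := by
    intro y
    show G ⟨(y, (((0:I):ℝ) * u y, sqq n)), hWmem y 0⟩ = f y
    have heq : ((y, (((0:I):ℝ) * u y, sqq n)) : Y × ℝ × ℝ) = (y, ((0:ℝ), sqq n)) := by
      norm_num
    rw [hGeq _ _ (hWmem y 0) (hAW (hbotA y)) heq]
    exact hbot y _
  -- condition at time 1
  have hH1 : ∀ z : Z, H (z, 1) = g n z := by
    rintro ⟨z, hz⟩
    show G ⟨(z, (((1:I):ℝ) * u z, sqq n)), hWmem z 1⟩ = g n ⟨z, hz⟩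
    have hmem : ((z, ((1:ℝ), sqq n)) : Y × ℝ × ℝ) ∈ A :=
      Or.inr (Or.inr ⟨hz, rfl, Or.inr ⟨n, rfl⟩⟩)
    have heq : ((z, (((1:I):ℝ) * u z, sqq n)) : Y × ℝ × ℝ) = (z, ((1:ℝ), sqq n)) := by
      rw [huZ z hz]
      norm_num
    rw [hGeq _ _ (hWmem z 1) (hAW hmem) heq]
    have h1 := hGF (z, ((1:ℝ), sqq n)) hmem
    have h2 : F ⟨(z, ((1:ℝ), sqq n)), hmem⟩ = g n ⟨z, hz⟩ := hFg _ hz rfl n rfl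
    exact h1.trans h2
  -- condition off U
  have hHoff : ∀ y : Y, y ∉ U → ∀ t : I, H (y, t) = f y := by
    intro y hyU t
    have hy0 : u y = 0 := by
      by_contra hne
      have h1 := hupos y hne
      have h2 : y ∈ thickening δU Z := by
        rw [mem_thickening_iff_infDist_lt hZne]
        exact h1.trans_le (min_le_right _ _)
      exact hyU (hδUsub h2)
    show G ⟨(y, ((t:ℝ) * u y, sqq n)), hWmem y t⟩ = f y
    have heq : ((y, ((t:ℝ) * u y, sqq n)) : Y × ℝ × ℝ) = (y, ((0:ℝ), sqq n)) := by
      rw [hy0, mul_zero]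
    rw [hGeq _ _ (hWmem y t) (hAW (hbotA y)) heq]
    exact hbot y _
  -- small tracks
  have hHdiam : ∀ y : Y, Metric.diam (H '' (({y} : Set Y) ×ˢ (univ : Set I))) < ε := by
    intro y
    have hle : Metric.diam (H '' (({y} : Set Y) ×ˢ (univ : Set I))) ≤ ε/2 := by
      apply diam_le_of_forall_dist_le (by positivity)
      rintro x₁ ⟨⟨y₁, τ₁⟩, ⟨hy₁, -⟩, rfl⟩ x₂ ⟨⟨y₂, τ₂⟩, ⟨hy₂, -⟩, rfl⟩
      have hy₁' : y₁ = y := hy₁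
      have hy₂' : y₂ = y := hy₂
      rw [hy₁', hy₂']
      by_cases hy0 : u y = 0
      · have hcommon : ∀ τ : I, H (y, τ) = f y := by
          intro τ
          show G ⟨(y, ((τ:ℝ) * u y, sqq n)), hWmem y τ⟩ = f y
          have heq : ((y, ((τ:ℝ) * u y, sqq n)) : Y × ℝ × ℝ) = (y, ((0:ℝ), sqq n)) := by
            rw [hy0, mul_zero]
          rw [hGeq _ _ (hWmem y τ) (hAW (hbotA y)) heq]
          exact hbot y _
        rw [show H (y, τ₁) = f y from hcommon τ₁, show H (y, τ₂) = f y from hcommon τ₂,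
          dist_self]
        positivity
      · obtain ⟨z, hzZ, hk⟩ := hkey y hy0
        obtain ⟨hw₁, hv₁⟩ := hk ((τ₁:ℝ) * u y) (mul_nonneg τ₁.2.1 (hu0 y))
          (mul_le_one₀ τ₁.2.2 (hu0 y) (hu1 y))
        obtain ⟨hw₂, hv₂⟩ := hk ((τ₂:ℝ) * u y) (mul_nonneg τ₂.2.1 (hu0 y))
          (mul_le_one₀ τ₂.2.2 (hu0 y) (hu1 y))
        have e₁ : H (y, τ₁) = G ⟨(y, ((τ₁:ℝ) * u y, sqq n)), hw₁⟩ := rfl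
        have e₂ : H (y, τ₂) = G ⟨(y, ((τ₂:ℝ) * u y, sqq n)), hw₂⟩ := rfl
        rw [e₁, e₂]
        have htr := dist_triangle (G ⟨(y, ((τ₁:ℝ) * u y, sqq n)), hw₁⟩) (f z)
          (G ⟨(y, ((τ₂:ℝ) * u y, sqq n)), hw₂⟩)
        have hv₂' : dist (f z) (G ⟨(y, ((τ₂:ℝ) * u y, sqq n)), hw₂⟩) < ε/8 := by
          rw [dist_comm]
          exact hv₂
        linarith
    linarith [hle]
  exact hgbad n ⟨H, hHc, hH0, hH1, hHoff, hHdiam⟩
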